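/- Word normalization of the decreasing encoding: let a be a nonempty word of distinct positive integers with maximum letter κ, and write a = a_L κ a_R. Then, modulo I: if a_L and a_R are both nonempty, f(a) =_I (2^κ ∘_2 f(a_R)) ∘_1 f(a_L); if a_L = ∅, f(a) =_I 2^κ ∘_2 f(a_R); if a_R = ∅, f(a) =_I 2^κ ∘_1 f(a_L); and if a consists of the single letter κ, f(a) = 2^κ. -/

import Mathlib

/-- Indexed terms of the language `L^I`: generators `2^k` and partial compositions. -/
inductive Trm : Type
  | gen : ℕ → Trm
  | comp : Trm → ℕ → Trm → Trm
deriving DecidableEq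

namespace Trm

/-- Arity `|A|`. -/
def arity : Trm → ℕ
  | gen _ => 2
  | comp A _ B => A.arity + B.arity - 1

/-- Set of indices occurring in a term. -/
def ind : Trm → Finset ℕ
  | gen k => {k}
  | comp A _ B => A.ind ∪ B.ind

/-- Root index. -/
def root : Trm → ℕ
  | gen k => k
  | comp A _ _ => A.root

/-- Number of occurrences of the generator. -/
def countGen : Trm → ℕ
  | gen _ => 1
  | comp A _ B => A.countGen + B.countGen

end Trm

/-- The congruence `=_I` generated by (assoc1) and (assoc2). -/
inductive IEq : Trm → Trm → Prop
  | refl (A : Trm) : IEq A A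
  | symm {A B} : IEq A B → IEq B A
  | trans {A B C} : IEq A B → IEq B C → IEq A C
  | congr {A A' B B'} (n : ℕ) : IEq A A' → IEq B B' →
      IEq (Trm.comp A n B) (Trm.comp A' n B')
  | assoc1 (A B C : Trm) (n m : ℕ) : n ≤ m → m < n + B.arity →
      IEq (Trm.comp (Trm.comp A n B) m C) (Trm.comp A n (Trm.comp B (m - n + 1) C))
  | assoc2 (A B C : Trm) (n m : ℕ) : n + B.arity ≤ m →
      IEq (Trm.comp (Trm.comp A n B) m C) (Trm.comp (Trm.comp A (m - B.arity + 1) C) n B)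

/-- Planar binary trees. -/
inductive BT : Type
  | leaf : BT
  | node : BT → BT → BT
deriving DecidableEq

namespace BT

/-- Number of leaves. -/
def leaves : BT → ℕ
  | leaf => 1
  | node l r => l.leaves + r.leaves

/-- Graft `S` at the `i`-th leaf (1-indexed) of a tree. -/
def graft : BT → ℕ → BT → BT
  | leaf, _, S => S
  | node l r, i, S =>
    if i ≤ l.leaves then node (l.graft i S) r else node l (r.graft (i - l.leaves) S)

end BT

/-- Evaluation `ε` of indexed terms to planar binary trees. -/
def Trm.eval : Trm → BT
  | Trm.gen _ => BT.node BT.leaf BT.leaf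
  | Trm.comp A i B => A.eval.graft i B.eval

/-- `l`-factors. -/
inductive LFactor : Trm → Prop
  | gen (k : ℕ) : LFactor (Trm.gen k)
  | step {A : Trm} (j : ℕ) : LFactor A → j ∉ A.ind →
      LFactor (Trm.comp A ((A.ind.filter (· < j)).card + 1) (Trm.gen j))

/-- Auxiliary for the head-insertion encoding: `done` is the list of already
inserted letters. -/
def hAux : Trm → List ℕ → List ℕ → Trm
  | A, _, [] => A
  | A, done, y :: rest =>
      hAux (Trm.comp A ((done.filter (· < y)).length + 1) (Trm.gen y)) (done ++ [y]) rest

/-- Head-insertion encoding `h` (junk value on the empty word). -/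
def hWord : List ℕ → Trm
  | [] => Trm.gen 0
  | x :: rest => hAux (Trm.gen x) [x] rest

/-- `u_a(x)`: number of letters to the left of `x` in `a` that are greater than `x`. -/
def uCount (a : List ℕ) (x : ℕ) : ℕ := ((a.takeWhile (· ≠ x)).filter (x < ·)).length

/-- Decreasing rearrangement of a word. -/
def sortDesc (a : List ℕ) : List ℕ := (a.mergeSort (· ≤ ·)).reverse

/-- Decreasing encoding `f` (junk value on the empty word). -/
def fWord (a : List ℕ) : Trm :=
  match sortDesc a with
  | [] => Trm.gen 0
  | k :: rest => rest.foldl (fun A x => Trm.comp A (uCount a x + 1) (Trm.gen x)) (Trm.gen k)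

/-- Standardization of a word of distinct integers. -/
def std (a : List ℕ) : List ℕ := a.map (fun x => (a.filter (· ≤ x)).length)

/-- Tonks' vertex map, splitting form `φ`. -/
def tonksPhi (a : List ℕ) : BT :=
  match ha : a.getLast? with
  | none => BT.leaf
  | some x =>
      BT.node (tonksPhi (std (a.filter (· < x)))) (tonksPhi (std (a.filter (x < ·))))
termination_by a.length
decreasing_by
  · have hx : x ∈ a := List.mem_of_mem_getLast? (Option.mem_def.mpr ha)
    have : (a.filter (· < x)).length < a.length := by
      apply List.length_filter_lt_length_iff_exists.2
      exact ⟨x, hx, by simp⟩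
    simp [std]
    rw [← List.length_attach (l := a)]
    apply List.length_filter_lt_length_iff_exists.2
    exact ⟨⟨x, hx⟩, List.mem_attach _ _, by simp⟩
  · have hx : x ∈ a := List.mem_of_mem_getLast? (Option.mem_def.mpr ha)
    have : (a.filter (x < ·)).length < a.length := by
      apply List.length_filter_lt_length_iff_exists.2
      exact ⟨x, hx, by simp⟩
    simp [std]
    rw [← List.length_attach (l := a)]
    apply List.length_filter_lt_length_iff_exists.2
    exact ⟨⟨x, hx⟩, List.mem_attach _ _, by simp⟩

/-- Tonks' vertex map, head-grafting form `φ̂`. -/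
def phiHat : List ℕ → BT
  | [] => BT.leaf
  | x :: rest => (phiHat (std rest)).graft x (BT.node BT.leaf BT.leaf)
termination_by a => a.length
decreasing_by
  simp [std]

/-- The Loday–Ronco map `ψ`. -/
def lodayPsi (a : List ℕ) : BT :=
  match hm : a.maximum with
  | none => BT.leaf
  | some m =>
      let i := a.idxOf m
      BT.node (lodayPsi (std (a.take i))) (lodayPsi (std (a.drop (i + 1))))
termination_by a.length
decreasing_by
  · have hmem : m ∈ a := List.maximum_mem hm
    have hi : a.idxOf m < a.length := List.idxOf_lt_length_iff.2 hmem
    simp only [std, List.length_map, List.length_take]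
    omega
  · have : a ≠ [] := by rintro rfl; simp [List.maximum] at hm
    have : 0 < a.length := List.length_pos_iff.2 this
    simp only [std, List.length_map, List.length_drop]
    omega

/-- Inverse of a permutation word on `{1,…,n}`. -/
def invWord (π : List ℕ) : List ℕ :=
  (List.range π.length).map (fun j => π.idxOf (j + 1) + 1)


section Helpers

lemma uCount_erase {m x : ℕ} (h : m < x) (l : List ℕ) :
    uCount (l.erase m) x = uCount l x := by
  induction l with
  | nil => simp
  | cons a t ih =>
    by_cases ham : a = m
    · subst ham
      simp [uCount, List.takeWhile_cons, h.ne, List.filter_cons, Nat.not_lt.2 h.le]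
    · rw [List.erase_cons_tail (by simpa using ham)]
      by_cases hax : a = x
      · subst hax; simp [uCount, List.takeWhile_cons]
      · simp only [uCount, List.takeWhile_cons, hax, if_pos, ne_eq, not_false_iff,
          List.filter_cons] at ih ⊢
        by_cases hlt : x < a <;> simp_all

lemma takeWhile_ne_append {x : ℕ} {l1 : List ℕ} (h : x ∈ l1) (l2 : List ℕ) :
    (l1 ++ l2).takeWhile (· ≠ x) = l1.takeWhile (· ≠ x) := by
  induction l1 with
  | nil => cases h
  | cons a t ih =>
    by_cases hax : a = x
    · subst hax; simp [List.takeWhile_cons]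
    · have hxt : x ∈ t := (List.mem_cons.1 h).resolve_left (fun e => hax e.symm)
      rw [List.cons_append, List.takeWhile_cons, List.takeWhile_cons, if_pos (by simp [hax]),
        if_pos (by simp [hax]), ih hxt]

lemma length_takeWhile_ne_lt {x : ℕ} {l : List ℕ} (h : x ∈ l) :
    (l.takeWhile (· ≠ x)).length < l.length := by
  induction l with
  | nil => cases h
  | cons a t ih =>
    by_cases hax : a = x
    · subst hax; simp [List.takeWhile_cons]
    · have hxt : x ∈ t := (List.mem_cons.1 h).resolve_left (fun e => hax e.symm)
      rw [List.takeWhile_cons, if_pos (by simp [hax])]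
      simpa using ih hxt

lemma uCount_lt_length {x : ℕ} {l : List ℕ} (h : x ∈ l) : uCount l x < l.length :=
  lt_of_le_of_lt (List.length_filter_le _ _) (length_takeWhile_ne_lt h)

lemma uCount_left {aL aR : List ℕ} {κ x : ℕ} (hx : x ∈ aL) :
    uCount (aL ++ κ :: aR) x = uCount aL x := by
  rw [uCount, uCount, takeWhile_ne_append hx]

lemma takeWhile_append_all {p : ℕ → Bool} {l1 : List ℕ} (h : ∀ y ∈ l1, p y) (l2 : List ℕ) :
    (l1 ++ l2).takeWhile p = l1 ++ l2.takeWhile p := by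
  induction l1 with
  | nil => simp
  | cons a t ih =>
    simp [List.takeWhile_cons, h a (List.mem_cons_self), ih (fun y hy => h y (List.mem_cons_of_mem _ hy))]

lemma uCount_right {aL aR : List ℕ} {κ m : ℕ} (hm : m ∉ aL) (hκ : m < κ)
    (hL : ∀ y ∈ aL, m < y) :
    uCount (aL ++ κ :: aR) m = aL.length + 1 + uCount aR m := by
  rw [uCount]
  rw [takeWhile_append_all (p := fun y => decide (y ≠ m)) (fun y hy => by simpa using (hL y hy).ne')]
  rw [List.takeWhile_cons, if_pos (by simpa using hκ.ne')]
  rw [List.filter_append, List.filter_cons, if_pos (by simpa using hκ)]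
  rw [List.filter_eq_self.2 (fun y hy => by simpa using hL y hy)]
  simp [uCount]; omega

lemma sortDesc_perm (a : List ℕ) : (sortDesc a).Perm a :=
  (List.reverse_perm _).trans (List.mergeSort_perm a _)

lemma sortDesc_length (a : List ℕ) : (sortDesc a).length = a.length :=
  (sortDesc_perm a).length_eq

lemma mergeSort_sorted (l : List ℕ) : List.Pairwise (· ≤ ·) (l.mergeSort (· ≤ ·)) := by
  have := List.pairwise_mergeSort (le := fun a b : ℕ => decide (a ≤ b))
    (by intro a b c h1 h2; simp at *; omega) (by intro a b; simp; omega) l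
  simpa using this

lemma sortDesc_erase_min {a : List ℕ} {m : ℕ} (hm : m ∈ a) (hmin : ∀ x ∈ a, m ≤ x) :
    sortDesc a = sortDesc (a.erase m) ++ [m] := by
  have hperm : (a.mergeSort (· ≤ ·)).Perm a := List.mergeSort_perm a _
  have hms : m ∈ a.mergeSort (· ≤ ·) := hperm.mem_iff.2 hm
  obtain ⟨b, t, hbt⟩ : ∃ b t, a.mergeSort (· ≤ ·) = b :: t := by
    cases h : a.mergeSort (· ≤ ·) with
    | nil => rw [h] at hms; cases hms
    | cons b t => exact ⟨b, t, rfl⟩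
  have hsort := mergeSort_sorted a
  rw [hbt] at hsort hms hperm
  have hbm : b = m := by
    have h1 : m ≤ b := hmin b (hperm.mem_iff.1 (List.mem_cons_self))
    rcases List.mem_cons.1 hms with h2 | h2
    · exact h2.symm
    · exact le_antisymm (List.rel_of_pairwise_cons hsort h2) h1
  have htsort : List.Pairwise (· ≤ ·) t := hsort.of_cons
  have ht : (a.erase m).mergeSort (· ≤ ·) = t := by
    apply List.Perm.eq_of_pairwise' (mergeSort_sorted _) htsort
    have h1 : (a.erase m).Perm ((b :: t).erase m) := hperm.symm.erase m
    rw [hbm, List.erase_cons_head] at h1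
    exact (List.mergeSort_perm _ _).trans h1
  unfold sortDesc
  rw [hbt, ht, hbm]
  simp

lemma foldl_ins_congr (p q : ℕ → ℕ) (L : List ℕ) (h : ∀ x ∈ L, p x = q x) :
    ∀ A : Trm, L.foldl (fun A x => Trm.comp A (p x) (Trm.gen x)) A
       = L.foldl (fun A x => Trm.comp A (q x) (Trm.gen x)) A := by
  induction L with
  | nil => intro A; rfl
  | cons a t ih =>
    intro A
    simp only [List.foldl_cons, h a (List.mem_cons_self)]
    exact ih (fun x hx => h x (List.mem_cons_of_mem _ hx)) _

lemma arity_foldl (p : ℕ → ℕ) (L : List ℕ) :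
    ∀ A : Trm, (L.foldl (fun A x => Trm.comp A (p x) (Trm.gen x)) A).arity
      = A.arity + L.length := by
  induction L with
  | nil => intro A; simp
  | cons a t ih =>
    intro A
    simp only [List.foldl_cons, ih]
    simp [Trm.arity]; omega

lemma sortDesc_ne_nil {a : List ℕ} (h : a ≠ []) : sortDesc a ≠ [] := by
  intro hc
  have := sortDesc_length a
  rw [hc] at this
  exact h (List.length_eq_zero_iff.1 this.symm)

lemma fWord_eq_foldl {a : List ℕ} {k : ℕ} {rest : List ℕ} (h : sortDesc a = k :: rest) :
    fWord a = rest.foldl (fun A x => Trm.comp A (uCount a x + 1) (Trm.gen x)) (Trm.gen k) := by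
  rw [fWord, h]

lemma fWord_arity {a : List ℕ} (h : a ≠ []) : (fWord a).arity = a.length + 1 := by
  obtain ⟨k, rest, hk⟩ : ∃ k rest, sortDesc a = k :: rest := by
    cases hs : sortDesc a with
    | nil => exact absurd hs (sortDesc_ne_nil h)
    | cons k rest => exact ⟨k, rest, rfl⟩
  rw [fWord_eq_foldl hk, arity_foldl]
  have : (sortDesc a).length = a.length := sortDesc_length a
  rw [hk] at this
  simp [Trm.arity] at this ⊢
  omega

lemma sortDesc_singleton (m : ℕ) : sortDesc [m] = [m] := by
  exact List.perm_singleton.1 (sortDesc_perm [m])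

lemma fWord_singleton (m : ℕ) : fWord [m] = Trm.gen m := by
  rw [fWord_eq_foldl (sortDesc_singleton m)]
  rfl

lemma fWord_erase {a : List ℕ} {m : ℕ} (hm : m ∈ a) (hmin : ∀ x ∈ a, m ≤ x)
    (hnd : a.Nodup) (hlen : 2 ≤ a.length) :
    fWord a = Trm.comp (fWord (a.erase m)) (uCount a m + 1) (Trm.gen m) := by
  have hsd : sortDesc a = sortDesc (a.erase m) ++ [m] := sortDesc_erase_min hm hmin
  have hne : a.erase m ≠ [] := by
    intro hc
    have := List.length_erase_of_mem hm
    rw [hc] at this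
    simp at this
    omega
  obtain ⟨k, rest, hk⟩ : ∃ k rest, sortDesc (a.erase m) = k :: rest := by
    cases hs : sortDesc (a.erase m) with
    | nil => exact absurd hs (sortDesc_ne_nil hne)
    | cons k rest => exact ⟨k, rest, rfl⟩
  rw [hk] at hsd
  rw [fWord_eq_foldl (by rw [hsd]; rfl : sortDesc a = k :: (rest ++ [m])), fWord_eq_foldl hk]
  rw [List.foldl_append]
  simp only [List.foldl_cons, List.foldl_nil]
  congr 1
  apply foldl_ins_congr
  intro x hx
  have hxe : x ∈ a.erase m := by
    have : x ∈ sortDesc (a.erase m) := by rw [hk]; exact List.mem_cons_of_mem _ hx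
    exact (sortDesc_perm _).mem_iff.1 this
  have hxa : x ∈ a := List.mem_of_mem_erase hxe
  have hxm : x ≠ m := ((List.Nodup.mem_erase_iff hnd).1 hxe).1
  have : m < x := lt_of_le_of_ne (hmin x hxa) (Ne.symm hxm)
  rw [uCount_erase this]

lemma uCount_self (m : ℕ) : uCount [m] m = 0 := by simp [uCount]

lemma eq_singleton_of_erase_nil {l : List ℕ} {m : ℕ} (hm : m ∈ l) (h : l.erase m = []) :
    l = [m] := by
  have h1 := List.length_erase_of_mem hm
  rw [h] at h1
  simp only [List.length_nil] at h1
  have hlpos : 0 < l.length := List.length_pos_iff.2 (fun hc => by subst hc; cases hm)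
  obtain ⟨y, hy⟩ := List.length_eq_one_iff.1 (show l.length = 1 by omega)
  rw [hy] at hm ⊢
  simp at hm
  rw [hm]

lemma main_aux : ∀ (n : ℕ) (a aL aR : List ℕ) (κ : ℕ), a.length ≤ n → a.Nodup →
    a = aL ++ κ :: aR → (∀ x ∈ a, x ≤ κ) →
    (aL ≠ [] → aR ≠ [] →
        IEq (fWord a) (Trm.comp (Trm.comp (Trm.gen κ) 2 (fWord aR)) 1 (fWord aL))) ∧
    (aL = [] → aR ≠ [] → IEq (fWord a) (Trm.comp (Trm.gen κ) 2 (fWord aR))) ∧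
    (aR = [] → aL ≠ [] → IEq (fWord a) (Trm.comp (Trm.gen κ) 1 (fWord aL))) ∧
    (a = [κ] → fWord a = Trm.gen κ) := by
  intro n
  induction n with
  | zero =>
    intro a aL aR κ hlen hnd hsplit hmax
    exfalso
    rw [hsplit] at hlen
    simp at hlen
  | succ n ih =>
    intro a aL aR κ hlen hnd hsplit hmax
    have hκa : κ ∈ a := by rw [hsplit]; exact List.mem_append_right _ (List.mem_cons_self)
    have hnd2 : (aL ++ κ :: aR).Nodup := hsplit ▸ hnd
    have hndL : aL.Nodup := hnd2.of_append_left
    have hndR : aR.Nodup := (hnd2.of_append_right).of_cons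
    have hdisj : List.Disjoint aL (κ :: aR) := List.disjoint_of_nodup_append hnd2
    have hκL : κ ∉ aL := fun h => hdisj h (List.mem_cons_self)
    have hκR : κ ∉ aR := by
      have := hnd2.of_append_right
      exact (List.nodup_cons.1 this).1
    by_cases hone : a.length = 1
    · have hLR : aL = [] ∧ aR = [] := by
        rw [hsplit] at hone
        simp [List.length_append] at hone
        exact ⟨List.length_eq_zero_iff.1 (by omega), List.length_eq_zero_iff.1 (by omega)⟩
      obtain ⟨hL0, hR0⟩ := hLR
      subst hL0; subst hR0
      have ha : a = [κ] := by simpa using hsplit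
      exact ⟨fun h => absurd rfl h, fun _ h => absurd rfl h, fun _ h => absurd rfl h,
        fun _ => by rw [ha]; exact fWord_singleton κ⟩
    · have hane : a ≠ [] := by rw [hsplit]; simp
      have hlen2 : 2 ≤ a.length := by
        have : a.length ≠ 0 := fun h => hane (List.length_eq_zero_iff.1 h)
        omega
      have hconj4 : a = [κ] → fWord a = Trm.gen κ := fun h => absurd (by rw [h]; rfl) hone
      set m := a.toFinset.min' ⟨κ, List.mem_toFinset.2 hκa⟩ with hmdef
      have hma : m ∈ a := List.mem_toFinset.1 (a.toFinset.min'_mem _)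
      have hmin : ∀ x ∈ a, m ≤ x := fun x hx => Finset.min'_le _ _ (List.mem_toFinset.2 hx)
      have hmκ : m ≠ κ := by
        intro hmk
        have hall : ∀ x ∈ a, x = κ := fun x hx => le_antisymm (hmax x hx) (hmk ▸ hmin x hx)
        cases aL with
        | nil =>
          cases aR with
          | nil => rw [hsplit] at hone; simp at hone
          | cons y t =>
            have hy : y = κ := hall y (by rw [hsplit]; simp)
            exact hκR (by rw [← hy]; exact List.mem_cons_self)
        | cons y t =>
          have hy : y = κ := hall y (by rw [hsplit]; simp)
          exact hκL (by rw [← hy]; exact List.mem_cons_self)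
      have hmlt : m < κ := lt_of_le_of_ne (hmin κ hκa) hmκ
      have key : fWord a = Trm.comp (fWord (a.erase m)) (uCount a m + 1) (Trm.gen m) :=
        fWord_erase hma hmin hnd hlen2
      have hlen' : (a.erase m).length ≤ n := by
        rw [List.length_erase_of_mem hma]; omega
      have hnd' : (a.erase m).Nodup := hnd.erase m
      have hmax' : ∀ x ∈ a.erase m, x ≤ κ := fun x hx => hmax x (List.mem_of_mem_erase hx)
      have hmLR : m ∈ aL ∨ m ∈ aR := by
        rw [hsplit] at hma
        rcases List.mem_append.1 hma with h | h
        · exact Or.inl h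
        · rcases List.mem_cons.1 h with h | h
          · exact absurd h hmκ
          · exact Or.inr h
      rcases hmLR with hmL | hmR
      · -- m ∈ aL
        have hLne : aL ≠ [] := fun h => by rw [h] at hmL; cases hmL
        have hsplit' : a.erase m = aL.erase m ++ κ :: aR := by
          rw [hsplit, List.erase_append_left _ hmL]
        have conj' := ih (a.erase m) (aL.erase m) aR κ hlen' hnd' hsplit' hmax'
        have hminL : ∀ x ∈ aL, m ≤ x := fun x hx => hmin x (by rw [hsplit]; exact List.mem_append_left _ hx)
        have hu : uCount a m = uCount aL m := by rw [hsplit]; exact uCount_left hmL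
        have huLlt : uCount aL m < aL.length := uCount_lt_length hmL
        refine ⟨?_, fun h => absurd h hLne, ?_, hconj4⟩
        · -- aL ≠ [] → aR ≠ []
          intro _ hRne
          by_cases hLe : aL.erase m = []
          · have haL : aL = [m] := eq_singleton_of_erase_nil hmL hLe
            have h2 := conj'.2.1 hLe hRne
            have hua : uCount a m = 0 := by rw [hu, haL, uCount_self]
            rw [key, hua, haL, fWord_singleton]
            exact IEq.trans (IEq.congr _ h2 (IEq.refl _)) (IEq.refl _)
          · have h1' := conj'.1 hLe hRne
            have hlenL2 : 2 ≤ aL.length := by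
              have := List.length_erase_of_mem hmL
              have : (aL.erase m).length ≠ 0 := fun hh => hLe (List.length_eq_zero_iff.1 hh)
              have := List.length_erase_of_mem hmL
              have hLpos : 0 < aL.length := List.length_pos_iff.2 hLne
              omega
            have hfL : fWord aL = Trm.comp (fWord (aL.erase m)) (uCount aL m + 1) (Trm.gen m) :=
              fWord_erase hmL hminL hndL hlenL2
            have harL' : (fWord (aL.erase m)).arity = (aL.erase m).length + 1 := fWord_arity hLe
            rw [key, hu, hfL]
            refine IEq.trans (IEq.congr _ h1' (IEq.refl _)) ?_
            have h4 := IEq.assoc1 (Trm.comp (Trm.gen κ) 2 (fWord aR)) (fWord (aL.erase m))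
              (Trm.gen m) 1 (uCount aL m + 1) (by omega)
              (by rw [harL', List.length_erase_of_mem hmL]; omega)
            rw [show uCount aL m + 1 - 1 + 1 = uCount aL m + 1 from by omega] at h4
            exact h4
        · -- aR = [] → aL ≠ []
          intro hR0 _
          subst hR0
          by_cases hLe : aL.erase m = []
          · have haL : aL = [m] := eq_singleton_of_erase_nil hmL hLe
            have h4 : fWord (a.erase m) = Trm.gen κ := conj'.2.2.2 (by rw [hsplit', hLe]; rfl)
            have hua : uCount a m = 0 := by rw [hu, haL, uCount_self]
            rw [key, hua, h4, haL, fWord_singleton]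
            exact IEq.refl _
          · have h3' := conj'.2.2.1 rfl hLe
            have hlenL2 : 2 ≤ aL.length := by
              have h5 := List.length_erase_of_mem hmL
              have h6 : (aL.erase m).length ≠ 0 := fun hh => hLe (List.length_eq_zero_iff.1 hh)
              have hLpos : 0 < aL.length := List.length_pos_iff.2 hLne
              omega
            have hfL : fWord aL = Trm.comp (fWord (aL.erase m)) (uCount aL m + 1) (Trm.gen m) :=
              fWord_erase hmL hminL hndL hlenL2
            have harL' : (fWord (aL.erase m)).arity = (aL.erase m).length + 1 := fWord_arity hLe
            rw [key, hu, hfL]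
            refine IEq.trans (IEq.congr _ h3' (IEq.refl _)) ?_
            have h4 := IEq.assoc1 (Trm.gen κ) (fWord (aL.erase m))
              (Trm.gen m) 1 (uCount aL m + 1) (by omega)
              (by rw [harL', List.length_erase_of_mem hmL]; omega)
            rw [show uCount aL m + 1 - 1 + 1 = uCount aL m + 1 from by omega] at h4
            exact h4
      · -- m ∈ aR
        have hRne : aR ≠ [] := fun h => by rw [h] at hmR; cases hmR
        have hmnotL : m ∉ aL := fun h => hdisj h (List.mem_cons_of_mem _ hmR)
        have hsplit' : a.erase m = aL ++ κ :: aR.erase m := by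
          rw [hsplit, List.erase_append_right _ hmnotL,
            List.erase_cons_tail (by simpa using Ne.symm hmκ)]
        have conj' := ih (a.erase m) aL (aR.erase m) κ hlen' hnd' hsplit' hmax'
        have hminR : ∀ x ∈ aR, m ≤ x := fun x hx => hmin x
          (by rw [hsplit]; exact List.mem_append_right _ (List.mem_cons_of_mem _ hx))
        have hu : uCount a m = aL.length + 1 + uCount aR m := by
          rw [hsplit]
          exact uCount_right hmnotL hmlt (fun y hy => lt_of_le_of_ne
            (hmin y (by rw [hsplit]; exact List.mem_append_left _ hy))
            (fun e => hmnotL (by rw [e]; exact hy)))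
        have huRlt : uCount aR m < aR.length := uCount_lt_length hmR
        refine ⟨?_, ?_, fun h => absurd h hRne, hconj4⟩
        · -- aL ≠ [], aR ≠ []
          intro hLne _
          by_cases hRe : aR.erase m = []
          · have haR : aR = [m] := eq_singleton_of_erase_nil hmR hRe
            have h3' := conj'.2.2.1 hRe hLne
            have huRm : uCount aR m = 0 := by rw [haR, uCount_self]
            have harL : (fWord aL).arity = aL.length + 1 := fWord_arity hLne
            rw [key, hu, huRm, haR, fWord_singleton]
            refine IEq.trans (IEq.congr _ h3' (IEq.refl _)) ?_
            have h4 := IEq.assoc2 (Trm.gen κ) (fWord aL) (Trm.gen m) 1 (aL.length + 1 + 0 + 1)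
              (by rw [harL]; omega)
            rw [harL, show aL.length + 1 + 0 + 1 - (aL.length + 1) + 1 = 2 from by omega] at h4
            exact h4
          · have hlenR2 : 2 ≤ aR.length := by
              have h5 := List.length_erase_of_mem hmR
              have h6 : (aR.erase m).length ≠ 0 := fun hh => hRe (List.length_eq_zero_iff.1 hh)
              have hRpos : 0 < aR.length := List.length_pos_iff.2 hRne
              omega
            have h1' := conj'.1 hLne hRe
            have hfR : fWord aR = Trm.comp (fWord (aR.erase m)) (uCount aR m + 1) (Trm.gen m) :=
              fWord_erase hmR hminR hndR hlenR2
            have harR' : (fWord (aR.erase m)).arity = (aR.erase m).length + 1 := fWord_arity hRe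
            have harL : (fWord aL).arity = aL.length + 1 := fWord_arity hLne
            rw [key, hu, hfR]
            refine IEq.trans (IEq.congr _ h1' (IEq.refl _)) ?_
            have h4 := IEq.assoc2 (Trm.comp (Trm.gen κ) 2 (fWord (aR.erase m))) (fWord aL)
              (Trm.gen m) 1 (aL.length + 1 + uCount aR m + 1) (by rw [harL]; omega)
            rw [harL, show aL.length + 1 + uCount aR m + 1 - (aL.length + 1) + 1
              = uCount aR m + 2 from by omega] at h4
            refine IEq.trans h4 ?_
            refine IEq.congr _ ?_ (IEq.refl _)
            have h5 := IEq.assoc1 (Trm.gen κ) (fWord (aR.erase m)) (Trm.gen m) 2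
              (uCount aR m + 2) (by omega)
              (by rw [harR', List.length_erase_of_mem hmR]; omega)
            rw [show uCount aR m + 2 - 2 + 1 = uCount aR m + 1 from by omega] at h5
            exact h5
        · -- aL = [], aR ≠ []
          intro hL0 _
          subst hL0
          by_cases hRe : aR.erase m = []
          · have haR : aR = [m] := eq_singleton_of_erase_nil hmR hRe
            have h4 : fWord (a.erase m) = Trm.gen κ := conj'.2.2.2 (by rw [hsplit', hRe]; rfl)
            have hua : uCount a m = 1 := by rw [hu, haR, uCount_self]; rfl
            rw [key, hua, h4, haR, fWord_singleton]
            exact IEq.refl _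
          · have hlenR2 : 2 ≤ aR.length := by
              have h5 := List.length_erase_of_mem hmR
              have h6 : (aR.erase m).length ≠ 0 := fun hh => hRe (List.length_eq_zero_iff.1 hh)
              have hRpos : 0 < aR.length := List.length_pos_iff.2 hRne
              omega
            have h2' := conj'.2.1 rfl hRe
            have hfR : fWord aR = Trm.comp (fWord (aR.erase m)) (uCount aR m + 1) (Trm.gen m) :=
              fWord_erase hmR hminR hndR hlenR2
            have harR' : (fWord (aR.erase m)).arity = (aR.erase m).length + 1 := fWord_arity hRe
            have hua : uCount a m = uCount aR m + 1 := by rw [hu]; simp only [List.length_nil]; omega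
            rw [key, hua, hfR]
            refine IEq.trans (IEq.congr _ h2' (IEq.refl _)) ?_
            have h5 := IEq.assoc1 (Trm.gen κ) (fWord (aR.erase m)) (Trm.gen m) 2
              (uCount aR m + 1 + 1) (by omega)
              (by rw [harR', List.length_erase_of_mem hmR]; omega)
            rw [show uCount aR m + 1 + 1 - 2 + 1 = uCount aR m + 1 from by omega] at h5
            exact h5

end Helpers

/-- One Tamari (right rotation) step, at any subtree. -/
inductive TamariStep : BT → BT → Prop
  | rot (X Y Z : BT) : TamariStep (BT.node (BT.node X Y) Z) (BT.node X (BT.node Y Z))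
  | left {l l'} (r : BT) : TamariStep l l' → TamariStep (BT.node l r) (BT.node l' r)
  | right (l : BT) {r r'} : TamariStep r r' → TamariStep (BT.node l r) (BT.node l r')

/-- The Tamari order. -/
def TamariLE : BT → BT → Prop := Relation.ReflTransGen TamariStep

/-- The strict Tamari order. -/
def TamariLT : BT → BT → Prop := Relation.TransGen TamariStep

/-- One cover of the right weak Bruhat order on words. -/
inductive BruhatStep : List ℕ → List ℕ → Prop
  | swap (α : List ℕ) {u v : ℕ} (β : List ℕ) : u < v →
      BruhatStep (α ++ u :: v :: β) (α ++ v :: u :: β)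

/-- The right weak Bruhat order on words. -/
def BruhatLE : List ℕ → List ℕ → Prop := Relation.ReflTransGen BruhatStep

/-- Head-insertion index `k(a; σ)`. -/
def kIdx (a : ℕ) (σ : List ℕ) : ℕ := 1 + (σ.filter (· < a)).length

theorem fWord_normalization (a aL aR : List ℕ) (κ : ℕ) (hnd : a.Nodup)
    (hpos : ∀ x ∈ a, 0 < x) (hsplit : a = aL ++ κ :: aR) (hmax : ∀ x ∈ a, x ≤ κ) :
    (aL ≠ [] → aR ≠ [] →
        IEq (fWord a) (Trm.comp (Trm.comp (Trm.gen κ) 2 (fWord aR)) 1 (fWord aL))) ∧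
    (aL = [] → aR ≠ [] → IEq (fWord a) (Trm.comp (Trm.gen κ) 2 (fWord aR))) ∧
    (aR = [] → aL ≠ [] → IEq (fWord a) (Trm.comp (Trm.gen κ) 1 (fWord aL))) ∧
    (a = [κ] → fWord a = Trm.gen κ) := by
  exact main_aux a.length a aL aR κ le_rfl hnd hsplit hmax
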